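/- arXiv:math/0611109 — 2 statements merged into one kernel-verified Lean document; each statement's English description precedes it below -/
import Mathlib

section
/- Let p be a prime, n ≥ 1, and let g ∈ GL_n(ℚ_p) be regular elliptic. Then there exists an open subgroup K' of GL_n(ℚ_p) such that for every k ∈ K', the element k·g⁻¹ leaves no nonzero proper ℚ_p-subspace of ℚ_pⁿ invariant: if W is a ℚ_p-linear subspace of ℚ_pⁿ with (k·g⁻¹)(W) ⊆ W, then W = 0 or W = ℚ_pⁿ. Equivalently, the coset K'·g⁻¹ has empty intersection with every conjugate of the stabilizer in GL_n(ℚ_p) of a nonzero proper subspace of ℚ_pⁿ. -/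
open Matrix Polynomial

set_option maxHeartbeats 1000000

theorem no_inv_subspace {F : Type*} [Field F] {n : ℕ} (B : Matrix (Fin n) (Fin n) F)
    (hB : Irreducible B.charpoly) (W : Submodule F (Fin n → F))
    (hW : Submodule.map (Matrix.mulVecLin B) W ≤ W) : W = ⊥ ∨ W = ⊤ := by
  rcases eq_or_ne W ⊥ with h | h
  · exact Or.inl h
  right
  obtain ⟨w, hwW, hw0⟩ := Submodule.exists_mem_ne_zero_of_ne_bot h
  set c := B.charpoly with hc
  have hcdeg : c.natDegree = n := by
    rw [hc, Matrix.charpoly_natDegree_eq_dim, Fintype.card_fin]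
  let ev : Matrix (Fin n) (Fin n) F →ₗ[F] (Fin n → F) :=
    { toFun := fun X => X.mulVec w
      map_add' := fun X Y => Matrix.add_mulVec X Y w
      map_smul' := fun a X => (Matrix.smul_mulVec a X w) }
  let φ : F[X] →ₗ[F] (Fin n → F) := ev.comp (Polynomial.aeval B).toLinearMap
  have hφ : ∀ q : F[X], φ q = (Polynomial.aeval B q).mulVec w := fun _ => rfl
  let ρ : degreeLT F n →ₗ[F] (Fin n → F) := φ.comp (degreeLT F n).subtype
  have hρinj : Function.Injective ρ := by
    rw [← LinearMap.ker_eq_bot, LinearMap.ker_eq_bot']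
    rintro ⟨q, hq⟩ hq0
    rw [Polynomial.mem_degreeLT] at hq
    apply Subtype.ext
    show q = 0
    by_contra hqne
    have hndvd : ¬ c ∣ q := by
      intro hdvd
      have h3 := Polynomial.degree_le_of_dvd hdvd hqne
      have hdc : (c : F[X]).degree = (n : ℕ) := by
        rw [Polynomial.degree_eq_natDegree (Matrix.charpoly_monic B).ne_zero, hcdeg]
      rw [hdc] at h3
      exact absurd (lt_of_le_of_lt h3 hq) (lt_irrefl _)
    obtain ⟨u, v, huv⟩ := (hB.coprime_iff_not_dvd.mpr hndvd)
    have h1 : (Polynomial.aeval B) (u * c + v * q) = 1 := by rw [huv, _root_.map_one]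
    have h2 : (Polynomial.aeval B) (u * c + v * q)
        = (Polynomial.aeval B v) * (Polynomial.aeval B q) := by
      rw [_root_.map_add, _root_.map_mul, _root_.map_mul, Matrix.aeval_self_charpoly,
        mul_zero, zero_add]
    have hq00 : (Polynomial.aeval B q).mulVec w = 0 := by
      have : ρ ⟨q, Polynomial.mem_degreeLT.mpr hq⟩ = 0 := hq0
      exact this
    have : w = 0 := by
      have := congrArg (fun X => X.mulVec w) (h1.symm.trans h2)
      simpa [Matrix.one_mulVec, ← Matrix.mulVec_mulVec, hq00, Matrix.mulVec_zero] using this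
    exact hw0 this
  have hpow : ∀ i : ℕ, (B ^ i).mulVec w ∈ W := by
    intro i
    induction i with
    | zero => simpa [Matrix.one_mulVec] using hwW
    | succ i ih =>
      have : (B ^ (i + 1)).mulVec w = B.mulVec ((B ^ i).mulVec w) := by
        rw [Matrix.mulVec_mulVec, pow_succ']
      rw [this]
      exact hW ⟨_, ih, rfl⟩
  have key : ∀ q : F[X], (Polynomial.aeval B q).mulVec w ∈ W := by
    intro q
    induction q using Polynomial.induction_on' with
    | add q1 q2 hq1 hq2 => rw [_root_.map_add, Matrix.add_mulVec]; exact W.add_mem hq1 hq2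
    | monomial i a =>
      rw [Polynomial.aeval_monomial, ← Algebra.smul_def, Matrix.smul_mulVec]
      exact W.smul_mem a (hpow i)
  have hrange : LinearMap.range ρ ≤ W := by
    rintro _ ⟨⟨q, hq⟩, rfl⟩
    rw [show ρ ⟨q, hq⟩ = (Polynomial.aeval B q).mulVec w from rfl]
    exact key q
  have hfr : Module.finrank F (degreeLT F n) = n := by
    rw [(Polynomial.degreeLTEquiv F n).finrank_eq, Module.finrank_fin_fun]
  have h1 : n ≤ Module.finrank F W := by
    calc n = Module.finrank F (degreeLT F n) := hfr.symm
    _ = Module.finrank F (LinearMap.range ρ) := (LinearMap.finrank_range_of_inj hρinj).symm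
    _ ≤ Module.finrank F W := Submodule.finrank_mono hrange
  apply Submodule.eq_top_of_finrank_eq
  have h2 : Module.finrank F W ≤ n := by
    have := Submodule.finrank_le W
    rwa [Module.finrank_fin_fun] at this
  rw [Module.finrank_fin_fun]
  omega

theorem exists_unit_submatrix {F : Type*} [Field F] {n h : ℕ} (M : Matrix (Fin n) (Fin h) F)
    (hind : LinearIndependent F (fun j => Mᵀ j)) :
    ∃ r : Fin h → Fin n, IsUnit (M.submatrix r id) := by
  have hspan : Submodule.span F (Set.range (fun i => M i)) = ⊤ := by
    have h1 : M.rank = h := by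
      rw [Matrix.rank, Matrix.range_mulVecLin]
      rw [show Set.range M.col = Set.range (fun j => Mᵀ j) from rfl]
      rw [finrank_span_eq_card hind, Fintype.card_fin]
    have h2 : Mᵀ.rank = h := by rw [Matrix.rank_transpose, h1]
    have h3 : LinearMap.range Mᵀ.mulVecLin = Submodule.span F (Set.range (fun i => M i)) := by
      rw [Matrix.range_mulVecLin]; rfl
    apply Submodule.eq_top_of_finrank_eq
    rw [← h3, ← Matrix.rank, h2, Module.finrank_fin_fun]
  obtain ⟨b, hbt, hbspan, hbind⟩ := exists_linearIndependent F (Set.range (fun i => M i))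
  rw [hspan] at hbspan
  let B1 : Module.Basis b F (Fin h → F) := Module.Basis.mk hbind (by rw [Subtype.range_coe_subtype, Set.setOf_mem_eq]; exact hbspan.ge)
  let e : b ≃ Fin h := B1.indexEquiv (Pi.basisFun F (Fin h))
  have hsel : ∀ j : Fin h, ∃ i : Fin n, M i = ((e.symm j : b) : Fin h → F) := fun j =>
    hbt (e.symm j).2
  choose r hr using hsel
  refine ⟨r, ?_⟩
  rw [← Matrix.linearIndependent_rows_iff_isUnit]
  have : (fun j => M.submatrix r id j) = ⇑(B1.reindex e) := by
    funext j
    rw [Module.Basis.reindex_apply]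
    have : B1 (e.symm j) = ((e.symm j : b) : Fin h → F) := by
      rw [Module.Basis.mk_apply]
    rw [this]
    funext bb
    rw [Matrix.submatrix_apply, id_eq, hr j]
  rw [show (M.submatrix r id).row = fun j => M.submatrix r id j from rfl, this]
  exact (B1.reindex e).linearIndependent

theorem isCompact_entrywise {p : ℕ} [Fact p.Prime] {m k : Type*} [Fintype m] [Fintype k]
    (A : Matrix m k ℚ_[p]) (c : ℝ) :
    IsCompact {B : Matrix m k ℚ_[p] | ∀ i j, ‖B i j - A i j‖ ≤ c} := by
  have : {B : Matrix m k ℚ_[p] | ∀ i j, ‖B i j - A i j‖ ≤ c}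
      = Set.univ.pi (fun i : m => Set.univ.pi (fun j : k => Metric.closedBall (A i j) c)) := by
    ext B
    constructor
    · intro hB i _
      intro j _
      rw [Metric.mem_closedBall, dist_eq_norm]
      exact hB i j
    · intro hB i j
      have := hB i (Set.mem_univ i) j (Set.mem_univ j)
      rwa [Metric.mem_closedBall, dist_eq_norm] at this
  rw [this]
  exact isCompact_univ_pi (fun i => isCompact_univ_pi (fun j => isCompact_closedBall _ _))

theorem norm_sum_lt {p : ℕ} [Fact p.Prime] {m : Type*} [Fintype m] [Nonempty m] {f : m → ℚ_[p]} {ε : ℝ}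
    (hε : 0 < ε) (hf : ∀ i, ‖f i‖ < ε) : ‖∑ i, f i‖ < ε := by
  calc ‖∑ i, f i‖ ≤ Finset.univ.sup' Finset.univ_nonempty (fun i => ‖f i‖) :=
        Finset.Nonempty.norm_sum_le_sup'_norm Finset.univ_nonempty f
  _ < ε := (Finset.sup'_lt_iff Finset.univ_nonempty).mpr (fun i _ => hf i)

theorem exists_entry_ball {p : ℕ} [Fact p.Prime] {m k : Type*} [Fintype m] [Fintype k]
    {V : Set (Matrix m k ℚ_[p])} (hV : IsOpen V) {A : Matrix m k ℚ_[p]} (hA : A ∈ V) :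
    ∃ ε > (0:ℝ), ∀ B : Matrix m k ℚ_[p], (∀ i j, ‖B i j - A i j‖ < ε) → B ∈ V := by
  have hφ : Continuous (fun x : m → k → ℚ_[p] => (Matrix.of x : Matrix m k ℚ_[p])) :=
    continuous_matrix fun i j => continuous_apply_apply i j
  have hO : IsOpen ((fun x : m → k → ℚ_[p] => (Matrix.of x : Matrix m k ℚ_[p])) ⁻¹' V) :=
    hV.preimage hφ
  have hAO : (Matrix.of.symm A : m → k → ℚ_[p]) ∈ _ := Set.mem_preimage.mpr (by
    show (Matrix.of (Matrix.of.symm A) : Matrix m k ℚ_[p]) ∈ V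
    simpa using hA)
  obtain ⟨ε, hε, hball⟩ := Metric.isOpen_iff.mp hO _ hAO
  refine ⟨ε, hε, fun B hB => ?_⟩
  have : (Matrix.of.symm B : m → k → ℚ_[p]) ∈ Metric.ball (Matrix.of.symm A : m → k → ℚ_[p]) ε := by
    rw [Metric.mem_ball, dist_pi_lt_iff hε]
    intro i
    rw [dist_pi_lt_iff hε]
    intro j
    rw [dist_eq_norm]
    exact hB i j
  have := hball this
  simpa using this

theorem exists_P (p : ℕ) [Fact p.Prime] {n h : ℕ} (hn : 1 ≤ n)
    (M : Matrix (Fin n) (Fin h) ℚ_[p])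
    (hind : LinearIndependent ℚ_[p] (fun j => Mᵀ j)) :
    ∃ (P : Matrix (Fin n) (Fin h) ℚ_[p]) (r : Fin h → Fin n),
      (∀ i j, ‖P i j‖ ≤ 1) ∧ P.submatrix r id = 1 ∧
      LinearMap.range P.mulVecLin = LinearMap.range M.mulVecLin := by
  haveI : Nonempty (Fin n) := ⟨⟨0, hn⟩⟩
  have hne : (Finset.univ : Finset (Fin h → Fin n)).Nonempty := Finset.univ_nonempty
  obtain ⟨r₀, -, hmax⟩ := Finset.exists_max_image Finset.univ
    (fun r : Fin h → Fin n => ‖(M.submatrix r id).det‖) hne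
  obtain ⟨r₁, hr₁⟩ := exists_unit_submatrix M hind
  have hdet1 : (M.submatrix r₁ id).det ≠ 0 :=
    ((Matrix.isUnit_iff_isUnit_det _).mp hr₁).ne_zero
  set Ms := M.submatrix r₀ id with hMs
  have hdet : Ms.det ≠ 0 := by
    intro h0
    have := hmax r₁ (Finset.mem_univ _)
    rw [h0, norm_zero] at this
    exact hdet1 (norm_eq_zero.mp (le_antisymm this (norm_nonneg _)))
  have hinv : Ms⁻¹ * Ms = 1 := Matrix.nonsing_inv_mul Ms (Ne.isUnit hdet)
  have hinv' : Ms * Ms⁻¹ = 1 := Matrix.mul_nonsing_inv Ms (Ne.isUnit hdet)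
  set P := M * Ms⁻¹ with hP
  have hMP : P * Ms = M := by rw [hP, Matrix.mul_assoc, hinv, Matrix.mul_one]
  have hsub : P.submatrix r₀ id = 1 := by
    rw [hP, Matrix.submatrix_mul M Ms⁻¹ r₀ id id Function.bijective_id,
      Matrix.submatrix_id_id, ← hMs, hinv']
  refine ⟨P, r₀, ?_, hsub, ?_⟩
  · intro i j
    have hrow : M i = ∑ k, P i k • Ms k := by
      funext bb
      rw [← hMP, Matrix.mul_apply]
      simp [Finset.sum_apply]
    have hupd : Ms.updateRow j (M i) = M.submatrix (Function.update r₀ j i) id := by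
      ext a bb
      rw [Matrix.updateRow_apply, Matrix.submatrix_apply, id_eq, Function.update_apply]
      split <;> simp [hMs, Matrix.submatrix_apply]
    have hdetupd : (Ms.updateRow j (M i)).det = P i j * Ms.det := by
      rw [hrow, Matrix.det_updateRow_sum Ms j (fun k => P i k)]
      simp [smul_eq_mul]
    have hle : ‖(Ms.updateRow j (M i)).det‖ ≤ ‖Ms.det‖ := by
      rw [hupd]
      exact hmax _ (Finset.mem_univ _)
    rw [hdetupd, norm_mul] at hle
    have hpos : 0 < ‖Ms.det‖ := norm_pos_iff.mpr hdet
    have h1c : ‖P i j‖ * ‖Ms.det‖ ≤ 1 * ‖Ms.det‖ := by rw [one_mul]; exact hle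
    exact le_of_mul_le_mul_right h1c hpos
  · have h1 : LinearMap.range P.mulVecLin ≤ LinearMap.range M.mulVecLin := by
      rw [hP, Matrix.mulVecLin_mul]
      exact LinearMap.range_comp_le_range _ _
    have h2 : LinearMap.range M.mulVecLin ≤ LinearMap.range P.mulVecLin := by
      rw [← hMP, Matrix.mulVecLin_mul]
      exact LinearMap.range_comp_le_range _ _
    exact le_antisymm h1 h2

variable {p : ℕ} [Fact p.Prime]

theorem exists_good_nbhd {p : ℕ} [Fact p.Prime] {n : ℕ} (hn : 1 ≤ n) (A : Matrix (Fin n) (Fin n) ℚ_[p])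
    (hA : ∀ W : Submodule ℚ_[p] (Fin n → ℚ_[p]),
      Submodule.map A.mulVecLin W ≤ W → W = ⊥ ∨ W = ⊤) :
    ∃ V : Set (Matrix (Fin n) (Fin n) ℚ_[p]), IsOpen V ∧ A ∈ V ∧
      (∀ B ∈ V, ∀ i j, ‖B i j - A i j‖ < 1) ∧
      ∀ B ∈ V, ∀ W : Submodule ℚ_[p] (Fin n → ℚ_[p]),
        Submodule.map B.mulVecLin W ≤ W → W = ⊥ ∨ W = ⊤ := by
  classical
  -- the "bad" sets
  let CC : (h : ℕ) → (Fin h → Fin n) →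
      Set (Matrix (Fin n) (Fin h) ℚ_[p] × Matrix (Fin n) (Fin n) ℚ_[p]) := fun h r =>
    {x | (∀ i j, ‖x.1 i j‖ ≤ 1) ∧ x.1.submatrix r id = 1 ∧
      x.2 * x.1 = x.1 * ((x.2 * x.1).submatrix r id) ∧ (∀ i j, ‖x.2 i j - A i j‖ ≤ 1)}
  have hCCclosed : ∀ h r, IsClosed (CC h r) := by
    intro h r
    have e1 : IsClosed {x : Matrix (Fin n) (Fin h) ℚ_[p] × Matrix (Fin n) (Fin n) ℚ_[p] |
        ∀ i j, ‖x.1 i j‖ ≤ 1} := by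
      simp only [Set.setOf_forall]
      exact isClosed_iInter fun i => isClosed_iInter fun j =>
        isClosed_le ((continuous_fst.matrix_elem i j).norm) continuous_const
    have e2 : IsClosed {x : Matrix (Fin n) (Fin h) ℚ_[p] × Matrix (Fin n) (Fin n) ℚ_[p] |
        x.1.submatrix r id = 1} :=
      isClosed_eq (continuous_fst.matrix_submatrix r id) continuous_const
    have e3 : IsClosed {x : Matrix (Fin n) (Fin h) ℚ_[p] × Matrix (Fin n) (Fin n) ℚ_[p] |
        x.2 * x.1 = x.1 * ((x.2 * x.1).submatrix r id)} :=
      isClosed_eq (continuous_snd.matrix_mul continuous_fst)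
        (continuous_fst.matrix_mul ((continuous_snd.matrix_mul continuous_fst).matrix_submatrix r id))
    have e4 : IsClosed {x : Matrix (Fin n) (Fin h) ℚ_[p] × Matrix (Fin n) (Fin n) ℚ_[p] |
        ∀ i j, ‖x.2 i j - A i j‖ ≤ 1} := by
      simp only [Set.setOf_forall]
      exact isClosed_iInter fun i => isClosed_iInter fun j =>
        isClosed_le (((continuous_snd.matrix_elem i j).sub continuous_const).norm) continuous_const
    exact ((e1.inter (e2.inter (e3.inter e4))) : _)
  have hCCcompact : ∀ h r, IsCompact (CC h r) := by
    intro h r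
    have hKp : IsCompact {P : Matrix (Fin n) (Fin h) ℚ_[p] | ∀ i j, ‖P i j‖ ≤ 1} := by
      have := isCompact_entrywise (0 : Matrix (Fin n) (Fin h) ℚ_[p]) 1
      simpa using this
    have hD : IsCompact {B : Matrix (Fin n) (Fin n) ℚ_[p] | ∀ i j, ‖B i j - A i j‖ ≤ 1} :=
      isCompact_entrywise A 1
    apply IsCompact.of_isClosed_subset (hKp.prod hD) (hCCclosed h r)
    rintro ⟨P, B⟩ ⟨h1, _, _, h4⟩
    exact ⟨h1, h4⟩
  let Sset : (h : ℕ) → (Fin h → Fin n) → Set (Matrix (Fin n) (Fin n) ℚ_[p]) := fun h r =>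
    Prod.snd '' (CC h r)
  have hSclosed : ∀ h r, IsClosed (Sset h r) := fun h r =>
    ((hCCcompact h r).image continuous_snd).isClosed
  let ι := Σ h : Fin n, (Fin (h : ℕ) → Fin n)
  let T : Set (Matrix (Fin n) (Fin n) ℚ_[p]) :=
    ⋃ x : ι, if 1 ≤ (x.1 : ℕ) then Sset (x.1 : ℕ) x.2 else ∅
  have hTclosed : IsClosed T := by
    apply isClosed_iUnion_of_finite
    intro x
    split
    · exact hSclosed _ _
    · exact isClosed_empty
  -- A is not in T
  have hAT : A ∉ T := by
    intro hAmem
    rw [Set.mem_iUnion] at hAmem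
    obtain ⟨⟨h, r⟩, hx⟩ := hAmem
    rw [Set.mem_ite_empty_right] at hx  -- maybe wrong lemma
    obtain ⟨hh1, hmem⟩ := hx
    obtain ⟨⟨P, B⟩, ⟨hP1, hPr, hcomm, -⟩, hsnd⟩ := hmem
    have hBA : B = A := hsnd
    subst hBA
    set W := LinearMap.range P.mulVecLin with hW
    have hinv : Submodule.map B.mulVecLin W ≤ W := by
      rintro _ ⟨_, ⟨v, rfl⟩, rfl⟩
      refine ⟨((B * P).submatrix r id).mulVecLin v, ?_⟩
      simp only [Matrix.mulVecLin_apply, Matrix.mulVec_mulVec]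
      rw [← hcomm]
    have hWbot : W ≠ ⊥ := by
      intro hbot
      have j0 : Fin (h : ℕ) := ⟨0, hh1⟩
      have hx : P.mulVec (Pi.single j0 1) ∈ W := ⟨Pi.single j0 1, rfl⟩
      rw [hbot, Submodule.mem_bot] at hx
      have := congrFun hx (r j0)
      rw [Matrix.mulVec_single_one] at this
      have h1 : P (r j0) j0 = 0 := this
      have h2 : P (r j0) j0 = 1 := by
        have := congrFun (congrFun hPr j0) j0
        simpa [Matrix.submatrix_apply] using this
      rw [h1] at h2
      exact zero_ne_one h2
    have hWtop : W ≠ ⊤ := by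
      intro htop
      have h1 : Module.finrank ℚ_[p] W ≤ (h : ℕ) := by
        have := LinearMap.finrank_range_le P.mulVecLin
        rwa [Module.finrank_fin_fun] at this
      rw [htop, finrank_top, Module.finrank_fin_fun] at h1
      omega
    rcases hA W hinv with hc | hc
    · exact hWbot hc
    · exact hWtop hc
  -- the neighborhood
  refine ⟨{B | ∀ i j, ‖B i j - A i j‖ < 1} ∩ Tᶜ, ?_, ?_, ?_, ?_⟩
  · apply IsOpen.inter
    · simp only [Set.setOf_forall]
      exact isOpen_iInter_of_finite fun i => isOpen_iInter_of_finite fun j =>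
        isOpen_lt ((continuous_id.matrix_elem i j).sub continuous_const).norm continuous_const
    · exact hTclosed.isOpen_compl
  · constructor
    · intro i j
      simp
    · exact hAT
  · rintro B ⟨hB1, -⟩ i j
    exact hB1 i j
  rintro B ⟨hB1, hB2⟩ W hWinv
  by_contra hcon
  push_neg at hcon
  obtain ⟨hWbot, hWtop⟩ := hcon
  haveI : Nontrivial W := Submodule.nontrivial_iff_ne_bot.mpr hWbot
  set h : ℕ := Module.finrank ℚ_[p] W with hh
  have hh1 : 1 ≤ h := Module.finrank_pos_iff.mpr inferInstance
  have hlt : h < n := by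
    have := Submodule.finrank_lt (K := ℚ_[p]) (V := Fin n → ℚ_[p]) hWtop
    rwa [Module.finrank_fin_fun] at this
  let b : Module.Basis (Fin h) ℚ_[p] W := Module.finBasis ℚ_[p] W
  let M : Matrix (Fin n) (Fin h) ℚ_[p] := Matrix.of fun i j => (b j : Fin n → ℚ_[p]) i
  have hMind : LinearIndependent ℚ_[p] (fun j => Mᵀ j) := by
    have := b.linearIndependent.map' W.subtype (Submodule.ker_subtype W)
    exact this
  have hMrange : LinearMap.range M.mulVecLin = W := by
    rw [Matrix.range_mulVecLin]
    have : Set.range M.col = W.subtype '' Set.range b := by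
      rw [← Set.range_comp]
      rfl
    rw [this, Submodule.span_image, b.span_eq, Submodule.map_subtype_top]
  obtain ⟨P, r, hP1, hPr, hPrange⟩ := exists_P p hn M hMind
  have hPW : LinearMap.range P.mulVecLin = W := hPrange.trans hMrange
  have hcolP : ∀ j : Fin h, Pᵀ j ∈ W := by
    intro j
    rw [← hPW]
    exact ⟨Pi.single j 1, by rw [Matrix.mulVecLin_apply, Matrix.mulVec_single_one]; rfl⟩
  have hcol : ∀ j : Fin h, ∃ qv : Fin h → ℚ_[p], P *ᵥ qv = (B * P)ᵀ j := by
    intro j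
    have hBPj : (B * P)ᵀ j = B *ᵥ Pᵀ j := by
      funext i
      simp [Matrix.transpose_apply, Matrix.mul_apply, Matrix.mulVec, dotProduct]
    have hmem : B *ᵥ Pᵀ j ∈ W := by
      apply hWinv
      exact ⟨Pᵀ j, hcolP j, by rw [Matrix.mulVecLin_apply]⟩
    rw [← hPW] at hmem
    obtain ⟨qv, hqv⟩ := hmem
    exact ⟨qv, by rw [hBPj, ← hqv, Matrix.mulVecLin_apply]⟩
  choose qv hqv using hcol
  let Q' : Matrix (Fin h) (Fin h) ℚ_[p] := Matrix.of fun a j => qv j a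
  have hBP : B * P = P * Q' := by
    ext i j
    have := congrFun (hqv j) i
    rw [Matrix.transpose_apply] at this
    rw [← this]
    simp [Matrix.mul_apply, Matrix.mulVec, dotProduct, Q']
  have hQ : (B * P).submatrix r id = Q' := by
    rw [hBP, Matrix.submatrix_mul P Q' r id id Function.bijective_id,
      Matrix.submatrix_id_id, hPr, Matrix.one_mul]
  have hcond : B * P = P * ((B * P).submatrix r id) := by rw [hQ]; exact hBP
  have hBD : ∀ i j, ‖B i j - A i j‖ ≤ 1 := fun i j => le_of_lt (hB1 i j)
  apply hB2
  apply Set.mem_iUnion.mpr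
  refine ⟨⟨⟨h, hlt⟩, r⟩, ?_⟩
  rw [if_pos hh1]
  exact ⟨(P, B), ⟨hP1, hPr, hcond, hBD⟩, rfl⟩

/-- For a regular elliptic element `g` of `GL_n(ℚ_p)` there is an open subgroup `K'` such
that for every `k ∈ K'` the element `k * g⁻¹` leaves no nonzero proper `ℚ_p`-subspace of
`ℚ_pⁿ` invariant. -/
theorem regular_elliptic_no_invariant_subspace (p : ℕ) [Fact p.Prime] (n : ℕ) (hn : 1 ≤ n)
    (g : GL (Fin n) ℚ_[p])
    (hg : Irreducible (Matrix.charpoly (g : Matrix (Fin n) (Fin n) ℚ_[p]))) :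
    ∃ K' : Subgroup (GL (Fin n) ℚ_[p]), IsOpen (K' : Set (GL (Fin n) ℚ_[p])) ∧
      ∀ k ∈ K', ∀ W : Submodule ℚ_[p] (Fin n → ℚ_[p]),
        Submodule.map
            (Matrix.mulVecLin ((k * g⁻¹ : GL (Fin n) ℚ_[p]) : Matrix (Fin n) (Fin n) ℚ_[p])) W
          ≤ W → W = ⊥ ∨ W = ⊤ := by
  haveI : Nonempty (Fin n) := ⟨⟨0, hn⟩⟩
  set A : Matrix (Fin n) (Fin n) ℚ_[p] := ((g⁻¹ : GL (Fin n) ℚ_[p]) : Matrix (Fin n) (Fin n) ℚ_[p])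
    with hAdef
  have hAg : A * (g : Matrix (Fin n) (Fin n) ℚ_[p]) = 1 := by
    rw [hAdef, ← Units.val_mul, inv_mul_cancel, Units.val_one]
  have hgA : (g : Matrix (Fin n) (Fin n) ℚ_[p]) * A = 1 := by
    rw [hAdef, ← Units.val_mul, mul_inv_cancel, Units.val_one]
  have hAunit : IsUnit A := ⟨g⁻¹, rfl⟩
  -- A has no nontrivial invariant subspaces
  have hA : ∀ W : Submodule ℚ_[p] (Fin n → ℚ_[p]),
      Submodule.map A.mulVecLin W ≤ W → W = ⊥ ∨ W = ⊤ := by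
    intro W hW
    apply no_inv_subspace (g : Matrix (Fin n) (Fin n) ℚ_[p]) hg W
    -- invariance transfers from A = g⁻¹ to g
    have hinj : Function.Injective A.mulVecLin := by
      rw [Matrix.coe_mulVecLin]  -- maybe wrong
      exact Matrix.mulVec_injective_iff_isUnit.mpr hAunit
    let f : W →ₗ[ℚ_[p]] W := A.mulVecLin.restrict (fun x hx => hW ⟨x, hx, rfl⟩)
    have hfinj : Function.Injective f := by
      intro x y hxy
      apply Subtype.ext
      apply hinj
      exact congrArg Subtype.val hxy
    have hfsurj : Function.Surjective f :=
      (LinearMap.injective_iff_surjective (f := f)).mp hfinj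
    rintro _ ⟨x, hx, rfl⟩
    obtain ⟨y, hy⟩ := hfsurj ⟨x, hx⟩
    have hy' : A.mulVecLin (y : Fin n → ℚ_[p]) = x := congrArg Subtype.val hy
    have : (g : Matrix (Fin n) (Fin n) ℚ_[p]).mulVecLin x = (y : Fin n → ℚ_[p]) := by
      rw [← hy']
      simp only [Matrix.mulVecLin_apply, Matrix.mulVec_mulVec, hgA, Matrix.one_mulVec]
    rw [Matrix.mulVecLin_apply] at this ⊢
    rw [this]
    exact y.2
  obtain ⟨V, hVopen, hVA, -, hVprop⟩ := exists_good_nbhd hn A hA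
  obtain ⟨ε, hε, hball⟩ := exists_entry_ball hVopen hVA
  -- bound for entries of A
  set CA : ℝ := max 1 (Finset.univ.sup' (Finset.univ_nonempty (α := (Fin n × Fin n)))
    (fun ij => ‖A ij.1 ij.2‖)) with hCAdef
  have hCA1 : (1:ℝ) ≤ CA := le_max_left _ _
  have hCA0 : (0:ℝ) < CA := lt_of_lt_of_le one_pos hCA1
  have hCAe : ∀ l j, ‖A l j‖ ≤ CA := fun l j =>
    le_trans (Finset.le_sup' (fun ij : Fin n × Fin n => ‖A ij.1 ij.2‖)
      (Finset.mem_univ (l, j))) (le_max_right _ _)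
  set ε' : ℝ := min (ε / CA) 1 with hε'def
  have hε'0 : 0 < ε' := lt_min (div_pos hε hCA0) one_pos
  have hε'1 : ε' ≤ 1 := min_le_right _ _
  have hε'CA : ε' * CA ≤ ε := by
    calc ε' * CA ≤ (ε / CA) * CA := by
          apply mul_le_mul_of_nonneg_right (min_le_left _ _) (le_of_lt hCA0)
    _ = ε := div_mul_cancel₀ ε (ne_of_gt hCA0)
  -- the condition defining the subgroup
  set cond : GL (Fin n) ℚ_[p] → Prop :=
    fun k => ∀ i j, ‖((k : Matrix (Fin n) (Fin n) ℚ_[p]) - 1) i j‖ < ε' with hconddef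
  have hcond1 : cond 1 := by
    intro i j
    simp only [Units.val_one, sub_self, Matrix.zero_apply]
    simpa using hε'0
  have hcondmul : ∀ x y : GL (Fin n) ℚ_[p], cond x → cond y → cond (x * y) := by
    intro x y hx hy i j
    have hexp : ((x * y : GL (Fin n) ℚ_[p]) : Matrix (Fin n) (Fin n) ℚ_[p]) - 1
        = ((x : Matrix (Fin n) (Fin n) ℚ_[p]) - 1) * ((y : Matrix (Fin n) (Fin n) ℚ_[p]) - 1)
          + ((x : Matrix (Fin n) (Fin n) ℚ_[p]) - 1) + ((y : Matrix (Fin n) (Fin n) ℚ_[p]) - 1) := by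
      rw [Units.val_mul]
      noncomm_ring
    rw [hexp]
    set X := (x : Matrix (Fin n) (Fin n) ℚ_[p]) - 1
    set Y := (y : Matrix (Fin n) (Fin n) ℚ_[p]) - 1
    have hXY : ‖(X * Y) i j‖ < ε' := by
      rw [Matrix.mul_apply]
      apply norm_sum_lt hε'0
      intro l
      rw [norm_mul]
      calc ‖X i l‖ * ‖Y l j‖ ≤ ‖X i l‖ * 1 := by
            apply mul_le_mul_of_nonneg_left (le_trans (le_of_lt (hy l j)) hε'1) (norm_nonneg _)
      _ = ‖X i l‖ := mul_one _
      _ < ε' := hx i l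
    have h2 : ‖(X * Y + X) i j‖ < ε' := by
      rw [Matrix.add_apply]
      exact lt_of_le_of_lt (IsUltrametricDist.norm_add_le_max _ _) (max_lt hXY (hx i j))
    rw [Matrix.add_apply]
    exact lt_of_le_of_lt (IsUltrametricDist.norm_add_le_max _ _) (max_lt h2 (hy i j))
  let K' : Subgroup (GL (Fin n) ℚ_[p]) :=
    { carrier := {k | cond k ∧ cond k⁻¹}
      one_mem' := ⟨hcond1, by rw [inv_one]; exact hcond1⟩
      mul_mem' := by
        rintro a b ⟨ha1, ha2⟩ ⟨hb1, hb2⟩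
        refine ⟨hcondmul a b ha1 hb1, ?_⟩
        rw [_root_.mul_inv_rev]
        exact hcondmul b⁻¹ a⁻¹ hb2 ha2
      inv_mem' := by
        rintro a ⟨ha1, ha2⟩
        exact ⟨ha2, by rw [inv_inv]; exact ha1⟩ }
  have hopenM : IsOpen {X : Matrix (Fin n) (Fin n) ℚ_[p] | ∀ i j, ‖(X - 1) i j‖ < ε'} := by
    simp only [Set.setOf_forall]
    exact isOpen_iInter_of_finite fun i => isOpen_iInter_of_finite fun j =>
      isOpen_lt (((continuous_id.sub continuous_const).matrix_elem i j).norm) continuous_const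
  refine ⟨K', ?_, ?_⟩
  · have : (K' : Set (GL (Fin n) ℚ_[p]))
        = (Units.val ⁻¹' {X : Matrix (Fin n) (Fin n) ℚ_[p] | ∀ i j, ‖(X - 1) i j‖ < ε'})
          ∩ ((fun u : GL (Fin n) ℚ_[p] => ((u⁻¹ : GL (Fin n) ℚ_[p]) : Matrix (Fin n) (Fin n) ℚ_[p]))
            ⁻¹' {X : Matrix (Fin n) (Fin n) ℚ_[p] | ∀ i j, ‖(X - 1) i j‖ < ε'}) := rfl
    rw [this]
    exact (hopenM.preimage Units.continuous_val).inter (hopenM.preimage Units.continuous_coe_inv)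
  · rintro k ⟨hk1, -⟩ W hW
    have hB : ((k * g⁻¹ : GL (Fin n) ℚ_[p]) : Matrix (Fin n) (Fin n) ℚ_[p])
        = (k : Matrix (Fin n) (Fin n) ℚ_[p]) * A := Units.val_mul _ _
    have hmem : ((k : Matrix (Fin n) (Fin n) ℚ_[p]) * A) ∈ V := by
      apply hball
      intro i j
      have hdiff : ((k : Matrix (Fin n) (Fin n) ℚ_[p]) * A - A) i j
          = ∑ l, (((k : Matrix (Fin n) (Fin n) ℚ_[p]) - 1) i l) * A l j := by
        have : (k : Matrix (Fin n) (Fin n) ℚ_[p]) * A - A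
            = ((k : Matrix (Fin n) (Fin n) ℚ_[p]) - 1) * A := by noncomm_ring
        rw [this, Matrix.mul_apply]
      rw [← Matrix.sub_apply, hdiff]
      apply norm_sum_lt hε
      intro l
      rw [norm_mul]
      calc ‖((k : Matrix (Fin n) (Fin n) ℚ_[p]) - 1) i l‖ * ‖A l j‖
          ≤ ‖((k : Matrix (Fin n) (Fin n) ℚ_[p]) - 1) i l‖ * CA := by
            apply mul_le_mul_of_nonneg_left (hCAe l j) (norm_nonneg _)
      _ < ε' * CA := by apply mul_lt_mul_of_pos_right (hk1 i l) hCA0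
      _ ≤ ε := hε'CA
    rw [hB] at hW
    exact hVprop _ hmem W hW
end

section
/- Let p be a prime, n ≥ 1, let γ ∈ GL_n(ℚ_p) be regular elliptic, let K be a compact open subgroup of GL_n(ℚ_p), and let Z_K denote the subgroup of GL_n(ℚ_p) generated by K together with the scalar matrix p·1. Then for every g ∈ GL_n(ℚ_p), the image under the quotient map GL_n(ℚ_p) → GL_n(ℚ_p)/Z_K onto the space of left cosets of the set {h ∈ GL_n(ℚ_p) : h⁻¹ γ h ∈ g·Z_K} is a finite set of cosets. -/
open Matrix Polynomial

variable {p : ℕ} [Fact p.Prime]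

lemma sum_mulVec' {n : ℕ} {ι : Type*} (s : Finset ι) (A : ι → Matrix (Fin n) (Fin n) ℚ_[p])
    (v : Fin n → ℚ_[p]) : (∑ k ∈ s, A k) *ᵥ v = ∑ k ∈ s, (A k *ᵥ v) := by
  ext i
  simp [Matrix.mulVec, dotProduct, Finset.sum_mul, Matrix.sum_apply]
  rw [Finset.sum_comm]

lemma cyclic_indep {n : ℕ} (γM : Matrix (Fin n) (Fin n) ℚ_[p])
    (hγ : Irreducible γM.charpoly) (v : Fin n → ℚ_[p]) (hv : v ≠ 0) :
    LinearIndependent ℚ_[p] (fun k : Fin n => (γM ^ (k : ℕ)) *ᵥ v) := by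
  by_contra hdep
  obtain ⟨c, hsum, k₀, hk₀⟩ := Fintype.not_linearIndependent_iff.mp hdep
  set q : Polynomial ℚ_[p] := ∑ k : Fin n, C (c k) * X ^ (k : ℕ) with hq
  have hqne : q ≠ 0 := by
    intro h
    apply hk₀
    have : q.coeff (k₀ : ℕ) = c k₀ := by
      rw [hq, finset_sum_coeff]
      rw [Finset.sum_eq_single k₀]
      · simp
      · intro b _ hb
        rw [coeff_C_mul_X_pow]
        simp only [ite_eq_right_iff]
        intro hbe
        exact absurd (Fin.val_injective hbe.symm) hb
      · simp
    rw [h] at this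
    simpa using this.symm
  have hdeg : q.degree < γM.charpoly.degree := by
    have h1 : q.degree < (n : WithBot ℕ) := by
      rw [hq]
      apply lt_of_le_of_lt (degree_sum_le _ _)
      rw [Finset.sup_lt_iff (by exact_mod_cast WithBot.bot_lt_coe n)]
      intro k _
      exact lt_of_le_of_lt (degree_C_mul_X_pow_le _ _) (by exact_mod_cast k.2)
    rwa [Matrix.charpoly_degree_eq_dim, Fintype.card_fin]
  have hnd : ¬ γM.charpoly ∣ q := fun hdvd => hqne (eq_zero_of_dvd_of_degree_lt hdvd hdeg)
  obtain ⟨α, β, hαβ⟩ := (hγ.coprime_iff_not_dvd.mpr hnd)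
  have haq : (aeval γM q) *ᵥ v = 0 := by
    have h2 : aeval γM q = ∑ k : Fin n, c k • γM ^ (k : ℕ) := by
      rw [hq, map_sum]
      congr 1
      ext k
      rw [_root_.map_mul, aeval_C, map_pow, aeval_X, Algebra.smul_def]
    rw [h2, sum_mulVec']
    simpa [Matrix.smul_mulVec] using hsum
  have hv0 : v = 0 := by
    have h1 := congrArg (aeval γM) hαβ
    simp only [map_add, _root_.map_mul, _root_.map_one, Matrix.aeval_self_charpoly, mul_zero,
      zero_add] at h1
    calc v = (aeval γM β * aeval γM q) *ᵥ v := by rw [h1, Matrix.one_mulVec]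
    _ = aeval γM β *ᵥ (aeval γM q *ᵥ v) := by rw [Matrix.mulVec_mulVec]
    _ = 0 := by rw [haq, Matrix.mulVec_zero]
  exact hv hv0

lemma key_alg {n : ℕ} (γM a m : Matrix (Fin n) (Fin n) ℚ_[p])
    (hγ : Irreducible γM.charpoly) (ha : a ≠ 0) (hrel : γM * a = a * m) :
    a.det ≠ 0 := by
  obtain ⟨i, j, hij⟩ : ∃ i j, a i j ≠ 0 := by
    by_contra h
    push_neg at h
    exact ha (by ext i j; simpa using h i j)
  have hv : a *ᵥ Pi.single j 1 ≠ 0 := by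
    rw [Matrix.mulVec_single]
    intro h
    apply hij
    simpa using congrFun h i
  set e : Fin n → ℚ_[p] := Pi.single j 1 with he
  set v := a *ᵥ e with hvdef
  have hpow : ∀ k : ℕ, γM ^ k * a = a * m ^ k := by
    intro k
    induction k with
    | zero => simp
    | succ k ih =>
      rw [pow_succ, pow_succ, mul_assoc, hrel, ← mul_assoc, ih, mul_assoc]
  set U : Matrix (Fin n) (Fin n) ℚ_[p] := Matrix.of (fun i (k : Fin n) => ((γM ^ (k : ℕ)) *ᵥ v) i) with hU
  set W : Matrix (Fin n) (Fin n) ℚ_[p] := Matrix.of (fun i (k : Fin n) => ((m ^ (k : ℕ)) *ᵥ e) i) with hW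
  have hUW : a * W = U := by
    ext i k
    rw [Matrix.mul_apply]
    have h2 : (γM ^ (k : ℕ)) *ᵥ v = a *ᵥ ((m ^ (k : ℕ)) *ᵥ e) := by
      rw [hvdef, Matrix.mulVec_mulVec, Matrix.mulVec_mulVec, hpow]
    show ∑ j', a i j' * ((m ^ (k : ℕ)) *ᵥ e) j' = ((γM ^ (k : ℕ)) *ᵥ v) i
    rw [h2]
    rfl
  have hUunit : IsUnit U := by
    have hli := cyclic_indep γM hγ v hv
    have h3 : LinearIndependent ℚ_[p] (fun k : Fin n => Uᵀ k) := hli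
    replace h3 := Matrix.linearIndependent_rows_iff_isUnit.mp (show LinearIndependent ℚ_[p] (Uᵀ).row from h3)
    exact (Matrix.isUnit_transpose U).mp h3
  have hdetU : U.det ≠ 0 := by
    have h4 := (Matrix.isUnit_iff_isUnit_det U).mp hUunit
    simpa [isUnit_iff_ne_zero] using h4
  intro hda
  apply hdetU
  rw [← hUW, Matrix.det_mul, hda, zero_mul]
open Matrix

variable {p : ℕ} [Fact p.Prime] {n : ℕ}

lemma cont_val : Continuous (fun u : GL (Fin n) ℚ_[p] => (u : Matrix (Fin n) (Fin n) ℚ_[p])) :=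
  Units.continuous_val

lemma cont_normdet : Continuous (fun u : GL (Fin n) ℚ_[p] => ‖Matrix.det (u : Matrix (Fin n) (Fin n) ℚ_[p])‖) :=
  (Continuous.matrix_det cont_val).norm

lemma norm_det_eq_one (K : Subgroup (GL (Fin n) ℚ_[p])) (hKc : IsCompact (K : Set (GL (Fin n) ℚ_[p])))
    {k : GL (Fin n) ℚ_[p]} (hk : k ∈ K) : ‖Matrix.det (k : Matrix (Fin n) (Fin n) ℚ_[p])‖ = 1 := by
  obtain ⟨M, hM⟩ := (hKc.image cont_normdet).bddAbove
  have hbound : ∀ u ∈ K, ‖Matrix.det (u : Matrix (Fin n) (Fin n) ℚ_[p])‖ ≤ M := by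
    intro u hu
    exact hM (Set.mem_image_of_mem _ hu)
  have hdet_ne : ∀ u : GL (Fin n) ℚ_[p], Matrix.det (u : Matrix (Fin n) (Fin n) ℚ_[p]) ≠ 0 := by
    intro u
    have : IsUnit (Matrix.det (u : Matrix (Fin n) (Fin n) ℚ_[p])) :=
      (Matrix.isUnit_iff_isUnit_det _).mp u.isUnit
    simpa [isUnit_iff_ne_zero] using this
  -- key: powers stay in K
  have key : ∀ u ∈ K, ‖Matrix.det (u : Matrix (Fin n) (Fin n) ℚ_[p])‖ ≤ 1 := by
    intro u hu
    by_contra hgt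
    push_neg at hgt
    obtain ⟨j, hj⟩ := pow_unbounded_of_one_lt M hgt
    have hj2 : ‖Matrix.det ((u ^ j : GL (Fin n) ℚ_[p]) : Matrix (Fin n) (Fin n) ℚ_[p])‖ ≤ M :=
      hbound _ (pow_mem hu j)
    rw [Units.val_pow_eq_pow_val, Matrix.det_pow, norm_pow] at hj2
    linarith
  have h1 := key k hk
  have h2 := key k⁻¹ (inv_mem hk)
  rw [show ((k⁻¹ : GL (Fin n) ℚ_[p]) : Matrix (Fin n) (Fin n) ℚ_[p]).det
      = (Matrix.det (k : Matrix (Fin n) (Fin n) ℚ_[p]))⁻¹ by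
    rw [Matrix.coe_units_inv, Matrix.det_nonsing_inv, Ring.inverse_eq_inv']] at h2
  rw [norm_inv] at h2
  have h3 : (1:ℝ) ≤ ‖Matrix.det (k : Matrix (Fin n) (Fin n) ℚ_[p])‖ := by
    have hpos : 0 < ‖Matrix.det (k : Matrix (Fin n) (Fin n) ℚ_[p])‖ :=
      norm_pos_iff.mpr (hdet_ne k)
    rw [inv_le_one_iff₀] at h2
    rcases h2 with h | h
    · linarith
    · exact h
  linarith
open Matrix

variable {p : ℕ} [Fact p.Prime] {n : ℕ}

lemma z_zpow_coe (z : GL (Fin n) ℚ_[p]) (hz : (z : Matrix (Fin n) (Fin n) ℚ_[p]) = (p : ℚ_[p]) • 1)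
    (w : ℤ) : ((z ^ w : GL (Fin n) ℚ_[p]) : Matrix (Fin n) (Fin n) ℚ_[p])
      = ((p : ℚ_[p]) ^ w) • 1 := by
  have hp0 : (p : ℚ_[p]) ≠ 0 := by
    exact_mod_cast Nat.cast_ne_zero.mpr (Fact.out (p := p.Prime)).ne_zero
  have hnat : ∀ k : ℕ, ((z ^ k : GL (Fin n) ℚ_[p]) : Matrix (Fin n) (Fin n) ℚ_[p])
      = ((p : ℚ_[p]) ^ k) • 1 := by
    intro k
    induction k with
    | zero => simp
    | succ k ih =>
      rw [pow_succ, Units.val_mul, ih, hz, pow_succ, Matrix.smul_mul, Matrix.mul_smul,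
        Matrix.one_mul, smul_smul]
  rcases w with k | k
  · simpa using hnat k
  · rw [zpow_negSucc]
    set u := z ^ (k + 1) with hu
    have hval : (u : Matrix (Fin n) (Fin n) ℚ_[p]) = ((p : ℚ_[p]) ^ (k+1)) • 1 := hnat (k+1)
    have hmul : ((((p : ℚ_[p]) ^ (k+1))⁻¹ • 1 : Matrix (Fin n) (Fin n) ℚ_[p]))
        * (u : Matrix (Fin n) (Fin n) ℚ_[p]) = 1 := by
      rw [hval, Matrix.smul_mul, Matrix.mul_smul, Matrix.one_mul, smul_smul,
        inv_mul_cancel₀ (pow_ne_zero _ hp0), one_smul]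
    have hset : ((p : ℚ_[p]) ^ (Int.negSucc k)) = ((p : ℚ_[p]) ^ (k+1 : ℕ))⁻¹ := zpow_negSucc _ _
    rw [hset]
    calc ((u⁻¹ : GL (Fin n) ℚ_[p]) : Matrix (Fin n) (Fin n) ℚ_[p])
        = 1 * ((u⁻¹ : GL (Fin n) ℚ_[p]) : Matrix (Fin n) (Fin n) ℚ_[p]) := by rw [Matrix.one_mul]
      _ = ((((p : ℚ_[p]) ^ (k+1))⁻¹ • 1 : Matrix (Fin n) (Fin n) ℚ_[p]))
            * ((u : Matrix (Fin n) (Fin n) ℚ_[p]) * ((u⁻¹ : GL (Fin n) ℚ_[p]) : Matrix (Fin n) (Fin n) ℚ_[p])) := by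
          rw [← Matrix.mul_assoc, hmul]
      _ = ((p : ℚ_[p]) ^ (k+1 : ℕ))⁻¹ • 1 := by
          rw [← Units.val_mul, mul_inv_cancel, Units.val_one, Matrix.mul_one]

-- z central
lemma z_central (z : GL (Fin n) ℚ_[p]) (hz : (z : Matrix (Fin n) (Fin n) ℚ_[p]) = (p : ℚ_[p]) • 1)
    (a : GL (Fin n) ℚ_[p]) : a * z = z * a := by
  ext
  simp only [Units.val_mul, hz]
  rw [Matrix.mul_smul, Matrix.smul_mul, Matrix.mul_one, Matrix.one_mul]
open Matrix

variable {p : ℕ} [Fact p.Prime] {n : ℕ}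

lemma Z_mem_iff (K : Subgroup (GL (Fin n) ℚ_[p])) (z : GL (Fin n) ℚ_[p])
    (hzc : ∀ a : GL (Fin n) ℚ_[p], a * z = z * a) (w : GL (Fin n) ℚ_[p]) :
    w ∈ Subgroup.closure ((K : Set (GL (Fin n) ℚ_[p])) ∪ {z})
      ↔ ∃ k ∈ K, ∃ m : ℤ, w = k * z ^ m := by
  have hzc' : ∀ (m : ℤ) (a : GL (Fin n) ℚ_[p]), a * z ^ m = z ^ m * a := fun m a =>
    (Commute.zpow_right (hzc a) m)
  constructor
  · intro hw
    refine Subgroup.closure_induction ?_ ?_ ?_ ?_ hw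
    · rintro x (hx | hx)
      · exact ⟨x, hx, 0, by simp⟩
      · exact ⟨1, one_mem K, 1, by simp [Set.mem_singleton_iff.mp hx]⟩
    · exact ⟨1, one_mem K, 0, by simp⟩
    · rintro x y - - ⟨k₁, hk₁, m₁, rfl⟩ ⟨k₂, hk₂, m₂, rfl⟩
      refine ⟨k₁ * k₂, mul_mem hk₁ hk₂, m₁ + m₂, ?_⟩
      rw [mul_assoc, ← mul_assoc (z ^ m₁), ← hzc' m₁ k₂, mul_assoc, ← _root_.zpow_add, mul_assoc]
    · rintro x - ⟨k, hk, m, rfl⟩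
      refine ⟨k⁻¹, inv_mem hk, -m, ?_⟩
      rw [_root_.mul_inv_rev, ← _root_.zpow_neg, hzc' (-m) k⁻¹]
  · rintro ⟨k, hk, m, rfl⟩
    have hzZ : z ∈ Subgroup.closure ((K : Set (GL (Fin n) ℚ_[p])) ∪ {z}) :=
      Subgroup.subset_closure (by simp)
    exact mul_mem (Subgroup.subset_closure (Or.inl hk)) (zpow_mem hzZ m)
open Matrix

variable {p : ℕ} [Fact p.Prime] {n : ℕ}

lemma ball_compact (R : ℝ) : IsCompact {x : ℚ_[p] | ‖x‖ ≤ R} := by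
  have h : {x : ℚ_[p] | ‖x‖ ≤ R} = Metric.closedBall 0 R := by
    ext x; simp [Metric.mem_closedBall, dist_zero_right]
  rw [h]; exact isCompact_closedBall 0 R

lemma matball_compact (R : ℝ) :
    IsCompact {A : Matrix (Fin n) (Fin n) ℚ_[p] | ∀ i j, ‖A i j‖ ≤ R} := by
  have h : {A : Matrix (Fin n) (Fin n) ℚ_[p] | ∀ i j, ‖A i j‖ ≤ R}
      = Set.univ.pi (fun _ : Fin n => Set.univ.pi (fun _ : Fin n => {x : ℚ_[p] | ‖x‖ ≤ R})) := by
    ext A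
    constructor
    · intro hA i _ j _
      exact hA i j
    · intro hA i j
      exact hA i (Set.mem_univ i) j (Set.mem_univ j)
  rw [h]
  exact isCompact_univ_pi (fun i => isCompact_univ_pi (fun j => ball_compact R))

lemma matball_closed (R : ℝ) :
    IsClosed {A : Matrix (Fin n) (Fin n) ℚ_[p] | ∀ i j, ‖A i j‖ ≤ R} := by
  have h : {A : Matrix (Fin n) (Fin n) ℚ_[p] | ∀ i j, ‖A i j‖ ≤ R}
      = ⋂ i, ⋂ j, {A : Matrix (Fin n) (Fin n) ℚ_[p] | ‖A i j‖ ≤ R} := by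
    ext A; simp
  rw [h]
  refine isClosed_iInter (fun i => isClosed_iInter (fun j => ?_))
  exact isClosed_le ((continuous_apply j).comp (continuous_apply i)).norm continuous_const

lemma omega_compact (R : ℝ) :
    IsCompact {u : GL (Fin n) ℚ_[p] |
      (∀ i j, ((u : Matrix (Fin n) (Fin n) ℚ_[p]) i j) ∈ {x : ℚ_[p] | ‖x‖ ≤ 1}) ∧
      (∀ i j, (((u⁻¹ : GL (Fin n) ℚ_[p]) : Matrix (Fin n) (Fin n) ℚ_[p]) i j) ∈ {x : ℚ_[p] | ‖x‖ ≤ R})} := by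
  rw [Units.isEmbedding_embedProduct.isCompact_iff]
  set M := Matrix (Fin n) (Fin n) ℚ_[p]
  have himg : (Units.embedProduct M) ''
      {u : GL (Fin n) ℚ_[p] |
        (∀ i j, ((u : M) i j) ∈ {x : ℚ_[p] | ‖x‖ ≤ 1}) ∧
        (∀ i j, (((u⁻¹ : GL (Fin n) ℚ_[p]) : M) i j) ∈ {x : ℚ_[p] | ‖x‖ ≤ R})}
      = {y : M × Mᵐᵒᵖ | y.1 * (MulOpposite.unop y.2) = 1 ∧ (MulOpposite.unop y.2) * y.1 = 1 ∧
          (∀ i j, ‖y.1 i j‖ ≤ 1) ∧ (∀ i j, ‖(MulOpposite.unop y.2) i j‖ ≤ R)} := by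
    ext y
    constructor
    · rintro ⟨u, ⟨hu1, hu2⟩, rfl⟩
      refine ⟨?_, ?_, hu1, hu2⟩
      · simpa using u.val_inv
      · simpa using u.inv_val
    · rintro ⟨h1, h2, h3, h4⟩
      refine ⟨⟨y.1, MulOpposite.unop y.2, h1, h2⟩, ⟨h3, ?_⟩, ?_⟩
      · intro i j
        have : (⟨y.1, MulOpposite.unop y.2, h1, h2⟩ : GL (Fin n) ℚ_[p])⁻¹
            = ⟨MulOpposite.unop y.2, y.1, h2, h1⟩ := rfl
        rw [this]
        exact h4 i j
      · simp [Units.embedProduct]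
  rw [himg]
  apply IsCompact.of_isClosed_subset
    (((matball_compact 1).prod ((matball_compact R).image MulOpposite.continuous_op)))
  · have hc1 : Continuous (fun y : M × Mᵐᵒᵖ => y.1 * MulOpposite.unop y.2) :=
      Continuous.matrix_mul continuous_fst (MulOpposite.continuous_unop.comp continuous_snd)
    have hc2 : Continuous (fun y : M × Mᵐᵒᵖ => MulOpposite.unop y.2 * y.1) :=
      Continuous.matrix_mul (MulOpposite.continuous_unop.comp continuous_snd) continuous_fst
    refine IsClosed.inter (isClosed_eq hc1 continuous_const) ?_
    refine IsClosed.inter (isClosed_eq hc2 continuous_const) ?_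
    refine IsClosed.inter ((matball_closed 1).preimage continuous_fst) ?_
    exact (matball_closed R).preimage (MulOpposite.continuous_unop.comp continuous_snd)
  · rintro y ⟨-, -, h3, h4⟩
    refine ⟨h3, ?_⟩
    exact ⟨MulOpposite.unop y.2, h4, by simp⟩
open Matrix

variable {p : ℕ} [Fact p.Prime] {n : ℕ}

lemma adj_entry_le (A : Matrix (Fin n) (Fin n) ℚ_[p]) (hA : ∀ i j, ‖A i j‖ ≤ 1) (i j : Fin n) :
    ‖A.adjugate i j‖ ≤ 1 := by
  set B : Matrix (Fin n) (Fin n) ℤ_[p] := Matrix.of (fun i j => (⟨A i j, hA i j⟩ : ℤ_[p])) with hB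
  have hmap : (PadicInt.Coe.ringHom (p := p)).mapMatrix B = A := by
    ext i j; rfl
  have h1 := (PadicInt.Coe.ringHom (p := p)).map_adjugate B
  rw [hmap] at h1
  have h2 : A.adjugate i j = ((B.adjugate i j : ℤ_[p]) : ℚ_[p]) := by
    rw [← h1]; rfl
  rw [h2]
  exact PadicInt.norm_le_one _

lemma inv_entry_le (u : GL (Fin n) ℚ_[p]) (hA : ∀ i j, ‖(u : Matrix (Fin n) (Fin n) ℚ_[p]) i j‖ ≤ 1)
    (c : ℝ) (hc : 0 < c) (hdet : c ≤ ‖Matrix.det (u : Matrix (Fin n) (Fin n) ℚ_[p])‖) (i j : Fin n) :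
    ‖((u⁻¹ : GL (Fin n) ℚ_[p]) : Matrix (Fin n) (Fin n) ℚ_[p]) i j‖ ≤ c⁻¹ := by
  rw [Matrix.coe_units_inv, Matrix.inv_def]
  have hd : Ring.inverse (Matrix.det (u : Matrix (Fin n) (Fin n) ℚ_[p]))
      = (Matrix.det (u : Matrix (Fin n) (Fin n) ℚ_[p]))⁻¹ := Ring.inverse_eq_inv _
  rw [hd, Matrix.smul_apply, smul_eq_mul, norm_mul, norm_inv]
  have h1 : ‖(Matrix.det (u : Matrix (Fin n) (Fin n) ℚ_[p]))‖⁻¹ ≤ c⁻¹ :=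
    inv_anti₀ hc hdet
  calc ‖(Matrix.det (u : Matrix (Fin n) (Fin n) ℚ_[p]))‖⁻¹ * ‖(Matrix.adjugate _) i j‖
      ≤ ‖(Matrix.det (u : Matrix (Fin n) (Fin n) ℚ_[p]))‖⁻¹ * 1 := by
        apply mul_le_mul_of_nonneg_left (adj_entry_le _ hA i j) (by positivity)
    _ ≤ c⁻¹ := by rwa [mul_one]

lemma S_compact : IsCompact {A : Matrix (Fin n) (Fin n) ℚ_[p] |
    (∀ i j, ‖A i j‖ ≤ 1) ∧ ∃ i j, ‖A i j‖ = 1} := by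
  apply IsCompact.of_isClosed_subset (matball_compact 1)
  · rw [Set.setOf_and]
    refine IsClosed.inter (matball_closed 1) ?_
    have h : {A : Matrix (Fin n) (Fin n) ℚ_[p] | ∃ i j, ‖A i j‖ = 1}
        = ⋃ i, ⋃ j, {A : Matrix (Fin n) (Fin n) ℚ_[p] | ‖A i j‖ = 1} := by
      ext A; simp
    rw [h]
    refine isClosed_iUnion_of_finite (fun i => isClosed_iUnion_of_finite (fun j => ?_))
    exact isClosed_eq ((continuous_apply j).comp (continuous_apply i)).norm continuous_const
  · intro A hA; exact hA.1

lemma finite_image_quot (Z : Subgroup (GL (Fin n) ℚ_[p]))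
    (hZo : IsOpen (Z : Set (GL (Fin n) ℚ_[p])))
    {Ω : Set (GL (Fin n) ℚ_[p])} (hΩ : IsCompact Ω) :
    Set.Finite ((fun h => (QuotientGroup.mk h : GL (Fin n) ℚ_[p] ⧸ Z)) '' Ω) := by
  have hcover : Ω ⊆ ⋃ h ∈ Ω,
      {x : GL (Fin n) ℚ_[p] | (QuotientGroup.mk x : GL (Fin n) ℚ_[p] ⧸ Z) = QuotientGroup.mk h} := by
    intro x hx
    exact Set.mem_biUnion hx rfl
  have hopen : ∀ h : GL (Fin n) ℚ_[p],
      IsOpen {x : GL (Fin n) ℚ_[p] | (QuotientGroup.mk x : GL (Fin n) ℚ_[p] ⧸ Z) = QuotientGroup.mk h} := by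
    intro h
    have heq : {x : GL (Fin n) ℚ_[p] | (QuotientGroup.mk x : GL (Fin n) ℚ_[p] ⧸ Z) = QuotientGroup.mk h}
        = (fun x : GL (Fin n) ℚ_[p] => x⁻¹ * h) ⁻¹' (Z : Set (GL (Fin n) ℚ_[p])) := by
      ext x
      simp [QuotientGroup.eq]
    rw [heq]
    exact hZo.preimage (by continuity)
  obtain ⟨t, hts, htf, htcov⟩ := hΩ.elim_finite_subcover_image (fun h _ => hopen h) hcover
  apply Set.Finite.subset (htf.image (fun h => (QuotientGroup.mk h : GL (Fin n) ℚ_[p] ⧸ Z)))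
  rintro q ⟨x, hx, rfl⟩
  obtain ⟨h, hh, hxh⟩ := by
    have := htcov hx
    simpa using this
  exact ⟨h, hh, hxh.symm⟩

lemma exists_det_lb (γM : Matrix (Fin n) (Fin n) ℚ_[p]) (hγ : Irreducible γM.charpoly)
    (C : Set (Matrix (Fin n) (Fin n) ℚ_[p])) (hC : IsCompact C) :
    ∃ c : ℝ, 0 < c ∧ ∀ a m' : Matrix (Fin n) (Fin n) ℚ_[p],
      ((∀ i j, ‖a i j‖ ≤ 1) ∧ ∃ i j, ‖a i j‖ = 1) → m' ∈ C → γM * a = a * m' →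
        c ≤ ‖a.det‖ := by
  classical
  set S : Set (Matrix (Fin n) (Fin n) ℚ_[p]) :=
    {A | (∀ i j, ‖A i j‖ ≤ 1) ∧ ∃ i j, ‖A i j‖ = 1} with hS
  set Y : Set (Matrix (Fin n) (Fin n) ℚ_[p] × Matrix (Fin n) (Fin n) ℚ_[p]) :=
    (S ×ˢ C) ∩ {y | γM * y.1 = y.1 * y.2} with hY
  have hYc : IsCompact Y := by
    apply IsCompact.inter_right (S_compact.prod hC)
    exact isClosed_eq (Continuous.matrix_mul continuous_const continuous_fst)
      (Continuous.matrix_mul continuous_fst continuous_snd)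
  have hdetpos : ∀ y ∈ Y, 0 < ‖(y.1).det‖ := by
    rintro ⟨a, m'⟩ ⟨⟨haS, hmC⟩, hrel⟩
    obtain ⟨i, j, hij⟩ := haS.2
    have ha0 : a ≠ 0 := by
      intro h0
      rw [h0] at hij
      simp at hij
    have := key_alg γM a m' hγ ha0 hrel
    exact norm_pos_iff.mpr this
  rcases Y.eq_empty_or_nonempty with hYe | hYne
  · refine ⟨1, one_pos, ?_⟩
    intro a m' haS hmC hrel
    exfalso
    have haS' : a ∈ S := by rw [hS]; exact haS
    have hmemY : (a, m') ∈ Y := ⟨Set.mk_mem_prod haS' hmC, hrel⟩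
    rw [hYe] at hmemY
    exact hmemY
  · obtain ⟨y₀, hy₀Y, hy₀min⟩ := hYc.exists_isMinOn hYne
      ((Continuous.matrix_det continuous_fst).norm.continuousOn)
    refine ⟨‖(y₀.1).det‖, hdetpos y₀ hy₀Y, ?_⟩
    intro a m' haS hmC hrel
    have haS' : a ∈ S := by rw [hS]; exact haS
    exact hy₀min ⟨Set.mk_mem_prod haS' hmC, hrel⟩

/-- Let `γ ∈ GL_n(ℚ_p)` be regular elliptic, `K` a compact open subgroup, and `Z_K` the
subgroup generated by `K` together with the scalar matrix `p·1`.  Then for every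
`g ∈ GL_n(ℚ_p)` the set of left cosets `h·Z_K` with `h⁻¹ γ h ∈ g·Z_K` is finite. -/
theorem finite_conjugating_cosets (p : ℕ) [Fact p.Prime] (n : ℕ) (hn : 1 ≤ n)
    (γ : GL (Fin n) ℚ_[p])
    (hγ : Irreducible (Matrix.charpoly (γ : Matrix (Fin n) (Fin n) ℚ_[p])))
    (K : Subgroup (GL (Fin n) ℚ_[p]))
    (hKc : IsCompact (K : Set (GL (Fin n) ℚ_[p])))
    (hKo : IsOpen (K : Set (GL (Fin n) ℚ_[p])))
    (z : GL (Fin n) ℚ_[p]) (hz : (z : Matrix (Fin n) (Fin n) ℚ_[p]) = (p : ℚ_[p]) • 1)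
    (Z : Subgroup (GL (Fin n) ℚ_[p]))
    (hZ : Z = Subgroup.closure ((K : Set (GL (Fin n) ℚ_[p])) ∪ {z}))
    (g : GL (Fin n) ℚ_[p]) :
    Set.Finite ((fun h => (QuotientGroup.mk h : GL (Fin n) ℚ_[p] ⧸ Z)) ''
      {h : GL (Fin n) ℚ_[p] | g⁻¹ * (h⁻¹ * γ * h) ∈ Z}) := by
  classical
  have hp1 : (1:ℝ) < (p:ℝ) := by exact_mod_cast (Fact.out (p := p.Prime)).one_lt
  have hp0R : (0:ℝ) < (p:ℝ) := lt_trans one_pos hp1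
  have hn0 : n ≠ 0 := by omega
  have hFinNe : Nonempty (Fin n) := ⟨⟨0, hn⟩⟩
  set X : Set (GL (Fin n) ℚ_[p]) := {h | g⁻¹ * (h⁻¹ * γ * h) ∈ Z} with hX
  rcases X.eq_empty_or_nonempty with hXe | ⟨h₀, hh₀⟩
  · rw [hXe]; simp
  have hzc : ∀ a : GL (Fin n) ℚ_[p], a * z = z * a := z_central z hz
  have hzc' : ∀ (m : ℤ) (a : GL (Fin n) ℚ_[p]), a * z ^ m = z ^ m * a := fun m a =>
    Commute.zpow_right (hzc a) m
  have hKleZ : K ≤ Z := by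
    rw [hZ]; exact fun x hx => Subgroup.subset_closure (Or.inl hx)
  have hzZ : z ∈ Z := by
    rw [hZ]; exact Subgroup.subset_closure (Or.inr rfl)
  have hZopen : IsOpen (Z : Set (GL (Fin n) ℚ_[p])) := Subgroup.isOpen_mono hKleZ hKo
  have hmem : ∀ h ∈ X, ∃ k ∈ K, ∃ m : ℤ, g⁻¹ * (h⁻¹ * γ * h) = k * z ^ m := by
    intro h hh
    have hmem' := hh
    rw [hX, Set.mem_setOf_eq, hZ] at hmem'
    exact (Z_mem_iff K z hzc _).mp hmem'
  have hdet_ne' : ∀ u : GL (Fin n) ℚ_[p],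
      ((u : Matrix (Fin n) (Fin n) ℚ_[p])).det ≠ 0 := by
    intro u
    have h1 : IsUnit ((u : Matrix (Fin n) (Fin n) ℚ_[p])).det :=
      (Matrix.isUnit_iff_isUnit_det _).mp u.isUnit
    simpa [isUnit_iff_ne_zero] using h1
  have hNinv : ∀ u : GL (Fin n) ℚ_[p],
      ‖((u⁻¹ : GL (Fin n) ℚ_[p]) : Matrix (Fin n) (Fin n) ℚ_[p]).det‖
        = ‖((u : Matrix (Fin n) (Fin n) ℚ_[p])).det‖⁻¹ := by
    intro u
    rw [Matrix.coe_units_inv, Matrix.det_nonsing_inv, Ring.inverse_eq_inv, norm_inv]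
  have hNconj : ∀ h : GL (Fin n) ℚ_[p],
      ‖((g⁻¹ * (h⁻¹ * γ * h) : GL (Fin n) ℚ_[p]) : Matrix (Fin n) (Fin n) ℚ_[p]).det‖
        = ‖((g⁻¹ : GL (Fin n) ℚ_[p]) : Matrix (Fin n) (Fin n) ℚ_[p]).det‖
          * ‖((γ : GL (Fin n) ℚ_[p]) : Matrix (Fin n) (Fin n) ℚ_[p]).det‖ := by
    intro h
    have e : g⁻¹ * (h⁻¹ * γ * h) = g⁻¹ * h⁻¹ * γ * h := by group
    rw [e, Units.val_mul, Units.val_mul, Units.val_mul, Matrix.det_mul, Matrix.det_mul,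
      Matrix.det_mul, norm_mul, norm_mul, norm_mul, hNinv h]
    have hne := hdet_ne' h
    have hne2 : ‖((h : Matrix (Fin n) (Fin n) ℚ_[p])).det‖ ≠ 0 := norm_ne_zero_iff.mpr hne
    field_simp
  have hNkz : ∀ (k : GL (Fin n) ℚ_[p]), k ∈ K → ∀ m : ℤ,
      ‖((k * z ^ m : GL (Fin n) ℚ_[p]) : Matrix (Fin n) (Fin n) ℚ_[p]).det‖
        = (p:ℝ) ^ (-(m * (n:ℤ))) := by
    intro k hk m
    rw [Units.val_mul, Matrix.det_mul, norm_mul, norm_det_eq_one K hKc hk, one_mul,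
      z_zpow_coe z hz, Matrix.det_smul, Matrix.det_one, mul_one, norm_pow, norm_zpow,
      Padic.norm_p, Fintype.card_fin]
    rw [_root_.inv_zpow, ← _root_.zpow_neg, ← zpow_natCast ((p:ℝ) ^ (-m)) n,
      ← _root_.zpow_mul, neg_mul]
  obtain ⟨k₀, hk₀, m₀, hm₀⟩ := hmem h₀ hh₀
  have hkey : ∀ h ∈ X, ∃ k ∈ K, h⁻¹ * γ * h = g * (k * z ^ m₀) := by
    intro h hh
    obtain ⟨k, hk, m, hm⟩ := hmem h hh
    have e1 : (p:ℝ) ^ (-(m * (n:ℤ))) = (p:ℝ) ^ (-(m₀ * (n:ℤ))) := by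
      rw [← hNkz k hk m, ← hNkz k₀ hk₀ m₀, ← hm, ← hm₀, hNconj, hNconj]
    have e2 : -(m * (n:ℤ)) = -(m₀ * (n:ℤ)) := zpow_right_injective₀ hp0R (ne_of_gt hp1) e1
    have e3 : m = m₀ := by
      have e4 := neg_injective e2
      exact mul_right_cancel₀ (by exact_mod_cast hn0) e4
    refine ⟨k, hk, ?_⟩
    have e5 : g * (g⁻¹ * (h⁻¹ * γ * h)) = g * (k * z ^ m) := by rw [hm]
    rw [mul_inv_cancel_left] at e5
    rw [e5, e3]
  set C : Set (Matrix (Fin n) (Fin n) ℚ_[p]) :=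
    (fun k : GL (Fin n) ℚ_[p] =>
      ((g * (k * z ^ m₀) : GL (Fin n) ℚ_[p]) : Matrix (Fin n) (Fin n) ℚ_[p])) '' (K : Set _)
    with hC
  have hCc : IsCompact C := by
    apply hKc.image
    apply Units.continuous_val.comp
    exact (continuous_mul_left g).comp (continuous_mul_right (z ^ m₀))
  have hXC : ∀ h ∈ X,
      ((h⁻¹ * γ * h : GL (Fin n) ℚ_[p]) : Matrix (Fin n) (Fin n) ℚ_[p]) ∈ C := by
    intro h hh
    obtain ⟨k, hk, he⟩ := hkey h hh
    exact ⟨k, hk, congrArg Units.val he.symm⟩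
  obtain ⟨c, hc0, hcmin⟩ :=
    exists_det_lb ((γ : GL (Fin n) ℚ_[p]) : Matrix (Fin n) (Fin n) ℚ_[p]) hγ C hCc
  have hΩc := omega_compact (p := p) (n := n) c⁻¹
  apply Set.Finite.subset (finite_image_quot Z hZopen hΩc)
  rintro x ⟨h, hh, rfl⟩
  set A : Matrix (Fin n) (Fin n) ℚ_[p] := ((h : GL (Fin n) ℚ_[p]) : Matrix (Fin n) (Fin n) ℚ_[p])
    with hA
  have hAne : A ≠ 0 := by
    intro h0
    apply hdet_ne' h
    rw [← hA, h0]
    haveI := hFinNe; exact Matrix.det_zero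
  obtain ⟨ij₀, -, hmax⟩ := Finset.exists_max_image (Finset.univ : Finset (Fin n × Fin n))
    (fun ij => ‖A ij.1 ij.2‖) ⟨(⟨0, hn⟩, ⟨0, hn⟩), Finset.mem_univ _⟩
  obtain ⟨i₀, j₀⟩ := ij₀
  have hentry_ne : A i₀ j₀ ≠ 0 := by
    intro h0
    apply hAne
    ext i j
    have h5 := hmax (i, j) (Finset.mem_univ _)
    rw [h0, norm_zero] at h5
    simpa using norm_le_zero_iff.mp h5
  set w : ℤ := (A i₀ j₀).valuation with hw
  have hnormA : ‖A i₀ j₀‖ = (p:ℝ) ^ (-w) := Padic.norm_eq_zpow_neg_valuation hentry_ne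
  set h' : GL (Fin n) ℚ_[p] := z ^ (-w) * h with hh'
  have hh'coe : ((h' : GL (Fin n) ℚ_[p]) : Matrix (Fin n) (Fin n) ℚ_[p])
      = ((p:ℚ_[p]) ^ (-w)) • A := by
    rw [hh', Units.val_mul, z_zpow_coe z hz, Matrix.smul_mul, Matrix.one_mul, ← hA]
  have hfac : ‖(p:ℚ_[p]) ^ (-w)‖ = (p:ℝ) ^ w := by
    rw [norm_zpow, Padic.norm_p, _root_.inv_zpow, ← _root_.zpow_neg, neg_neg]
  have hentries : ∀ i j, ‖((h' : GL (Fin n) ℚ_[p]) : Matrix (Fin n) (Fin n) ℚ_[p]) i j‖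
      = (p:ℝ) ^ w * ‖A i j‖ := by
    intro i j
    rw [hh'coe, Matrix.smul_apply, smul_eq_mul, norm_mul, hfac]
  have hS1 : ∀ i j, ‖((h' : GL (Fin n) ℚ_[p]) : Matrix (Fin n) (Fin n) ℚ_[p]) i j‖ ≤ 1 := by
    intro i j
    rw [hentries]
    calc (p:ℝ) ^ w * ‖A i j‖ ≤ (p:ℝ) ^ w * ‖A i₀ j₀‖ := by
          exact mul_le_mul_of_nonneg_left (hmax (i, j) (Finset.mem_univ _))
            (le_of_lt (zpow_pos hp0R w))
      _ = 1 := by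
          rw [hnormA, ← zpow_add₀ (ne_of_gt hp0R), add_neg_cancel, zpow_zero]
  have hS2 : ‖((h' : GL (Fin n) ℚ_[p]) : Matrix (Fin n) (Fin n) ℚ_[p]) i₀ j₀‖ = 1 := by
    rw [hentries, hnormA, ← zpow_add₀ (ne_of_gt hp0R), add_neg_cancel, zpow_zero]
  have hconj : h'⁻¹ * γ * h' = h⁻¹ * γ * h := by
    rw [hh', _root_.mul_inv_rev]
    have hcen : (z ^ (-w))⁻¹ * γ * z ^ (-w) = γ := by
      rw [mul_assoc, hzc' (-w) γ, ← mul_assoc, inv_mul_cancel, one_mul]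
    calc h⁻¹ * (z ^ (-w))⁻¹ * γ * (z ^ (-w) * h)
        = h⁻¹ * ((z ^ (-w))⁻¹ * γ * z ^ (-w)) * h := by group
      _ = h⁻¹ * γ * h := by rw [hcen]
  have hX' : h' ∈ X := by
    rw [hX, Set.mem_setOf_eq, hconj]
    exact hh
  have hqeq : (QuotientGroup.mk h' : GL (Fin n) ℚ_[p] ⧸ Z) = QuotientGroup.mk h := by
    rw [QuotientGroup.eq]
    have h6 : h'⁻¹ * h = z ^ w := by
      rw [hh', _root_.mul_inv_rev]
      have h5 : (z ^ (-w))⁻¹ = z ^ w := by rw [← _root_.zpow_neg, neg_neg]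
      rw [h5, mul_assoc, ← hzc' w h, ← mul_assoc, inv_mul_cancel, one_mul]
    rw [h6]
    exact zpow_mem hzZ w
  have hrel : ((γ : GL (Fin n) ℚ_[p]) : Matrix (Fin n) (Fin n) ℚ_[p])
        * ((h' : GL (Fin n) ℚ_[p]) : Matrix (Fin n) (Fin n) ℚ_[p])
      = ((h' : GL (Fin n) ℚ_[p]) : Matrix (Fin n) (Fin n) ℚ_[p])
        * ((h'⁻¹ * γ * h' : GL (Fin n) ℚ_[p]) : Matrix (Fin n) (Fin n) ℚ_[p]) := by
    have h7 : γ * h' = h' * (h'⁻¹ * γ * h') := by group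
    calc ((γ : GL (Fin n) ℚ_[p]) : Matrix (Fin n) (Fin n) ℚ_[p])
          * ((h' : GL (Fin n) ℚ_[p]) : Matrix (Fin n) (Fin n) ℚ_[p])
        = ((γ * h' : GL (Fin n) ℚ_[p]) : Matrix (Fin n) (Fin n) ℚ_[p]) :=
          (Units.val_mul γ h').symm
      _ = ((h' * (h'⁻¹ * γ * h') : GL (Fin n) ℚ_[p]) : Matrix (Fin n) (Fin n) ℚ_[p]) :=
          congrArg Units.val h7
      _ = _ := Units.val_mul _ _
  have hmC : ((h'⁻¹ * γ * h' : GL (Fin n) ℚ_[p]) : Matrix (Fin n) (Fin n) ℚ_[p]) ∈ C :=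
    hXC h' hX'
  have hcle : c ≤ ‖((h' : GL (Fin n) ℚ_[p]) : Matrix (Fin n) (Fin n) ℚ_[p]).det‖ :=
    hcmin _ _ ⟨hS1, i₀, j₀, hS2⟩ hmC hrel
  refine ⟨h', ⟨fun i j => hS1 i j, fun i j => ?_⟩, hqeq⟩
  exact inv_entry_le h' hS1 c hc0 hcle i j
end
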